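/- Fix m, k ∈ ℕ. For every set U, every relation W ⊆ U×U, every valuation of the variables x_0,…,x_{m−1} into subsets of W, and every pair (r,s) ∈ W, there is exactly one normal form τ ∈ F_k^m such that (r,s) belongs to the relativized interpretation ⟦τ⟧. -/

import Mathlib

/-- Relation-type terms over `m` variables. -/
inductive RTerm (m : ℕ) : Type
  | var : Fin m → RTerm m
  | zero : RTerm m
  | one : RTerm m
  | id : RTerm m
  | add : RTerm m → RTerm m → RTerm m
  | mul : RTerm m → RTerm m → RTerm m
  | neg : RTerm m → RTerm m
  | comp : RTerm m → RTerm m → RTerm m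
  | conv : RTerm m → RTerm m
  deriving DecidableEq

/-- The diversity term `0′ = 1 · −1′`. -/
def RTerm.div {m : ℕ} : RTerm m := .mul .one (.neg .id)

/-- The list `D_m = {1′, x_0, …, x_{m−1}}`. -/
def listD (m : ℕ) : List (RTerm m) :=
  RTerm.id :: List.ofFn (fun i : Fin m => RTerm.var i)

/-- Signed product `Y^α`, where the sign of `x ∈ Y` is positive iff `x ∈ S`
(the empty product is `1`). -/
def sprodBy {m : ℕ} (Y S : List (RTerm m)) : RTerm m :=
  (Y.map (fun x => if x ∈ S then x else RTerm.neg x)).foldr RTerm.mul RTerm.one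

/-- The one-step closure `CY = {x;y : x,y ∈ Y} ∪ {x˘ : x ∈ Y}`. -/
def listC {m : ℕ} (Y : List (RTerm m)) : List (RTerm m) :=
  (Y.flatMap fun x => Y.map fun y => RTerm.comp x y) ++ Y.map RTerm.conv

/-- The normal forms `F_n^m`: `F_0^m = {D_m^β}`,
`F_{n+1}^m = {D_m^β · (C F_n^m)^α}`. -/
def forms (m : ℕ) : ℕ → List (RTerm m)
  | 0 => (listD m).sublists.map (sprodBy (listD m))
  | n + 1 =>
      (listD m).sublists.flatMap fun S =>
        (listC (forms m n)).sublists.map fun T =>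
          RTerm.mul (sprodBy (listD m) S) (sprodBy (listC (forms m n)) T)

/-- A Boolean algebra with operators of relation type: a Boolean algebra with a
distinguished identity element, a binary composition and a unary converse that
are normal and additive in each argument. -/
structure RelBAO (B : Type*) [BooleanAlgebra B] where
  rid : B
  comp : B → B → B
  conv : B → B
  comp_bot_left : ∀ x, comp ⊥ x = ⊥
  comp_bot_right : ∀ x, comp x ⊥ = ⊥
  comp_sup_left : ∀ x y z, comp (x ⊔ y) z = comp x z ⊔ comp y z
  comp_sup_right : ∀ x y z, comp x (y ⊔ z) = comp x y ⊔ comp x z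
  conv_bot : conv ⊥ = ⊥
  conv_sup : ∀ x y, conv (x ⊔ y) = conv x ⊔ conv y

/-- Evaluation of a relation-type term in a Boolean algebra with operators. -/
def beval {B : Type*} [BooleanAlgebra B] (A : RelBAO B) {m : ℕ} (v : Fin m → B) :
    RTerm m → B
  | .var i => v i
  | .zero => ⊥
  | .one => ⊤
  | .id => A.rid
  | .add a b => beval A v a ⊔ beval A v b
  | .mul a b => beval A v a ⊓ beval A v b
  | .neg a => (beval A v a)ᶜ
  | .comp a b => A.comp (beval A v a) (beval A v b)
  | .conv a => A.conv (beval A v a)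

/-- Relativized interpretation of relation-type terms inside a unit `W ⊆ U × U`. -/
def rint {U : Type*} (W : Set (U × U)) {m : ℕ} (v : Fin m → Set (U × U)) :
    RTerm m → Set (U × U)
  | .var i => v i
  | .zero => ∅
  | .one => W
  | .id => {p | p ∈ W ∧ p.1 = p.2}
  | .add a b => rint W v a ∪ rint W v b
  | .mul a b => rint W v a ∩ rint W v b
  | .neg a => W \ rint W v a
  | .comp a b => {p | p ∈ W ∧ ∃ c, (p.1, c) ∈ rint W v a ∧ (c, p.2) ∈ rint W v b}
  | .conv a => {p | p ∈ W ∧ (p.2, p.1) ∈ rint W v a}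

/-- The two relation properties `R` (reflexive) and `S` (symmetric). -/
inductive RS | R | S
  deriving DecidableEq

/-- `W` is an `H`-relation: reflexive on its base if `R ∈ H`,
symmetric if `S ∈ H`. -/
def IsHRel (H : Set RS) {U : Type*} (W : Set (U × U)) : Prop :=
  (RS.R ∈ H → ∀ a b : U, (a, b) ∈ W → (a, a) ∈ W ∧ (b, b) ∈ W) ∧
  (RS.S ∈ H → ∀ a b : U, (a, b) ∈ W → (b, a) ∈ W)

/-- The equation `τ = σ` is `RRA_H`-valid. -/
def Valid (H : Set RS) {m : ℕ} (τ σ : RTerm m) : Prop :=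
  ∀ (U : Type) (W : Set (U × U)) (v : Fin m → Set (U × U)),
    IsHRel H W → (∀ i, v i ⊆ W) → rint W v τ = rint W v σ

/-- `[σ]` is an atom of the free algebra `Fr_m(RRA_H)`. -/
def IsAtomT (H : Set RS) {m : ℕ} (σ : RTerm m) : Prop :=
  ¬ Valid H σ .zero ∧
    ∀ ρ : RTerm m, Valid H (σ.mul ρ) .zero ∨ Valid H (σ.mul (.neg ρ)) .zero

/-- `e1 = 1′·−(0′;0′)`. -/
def termE1 {m : ℕ} : RTerm m := .mul .id (.neg (.comp .div .div))
/-- `e2 = 1′·(0′;0′)`. -/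
def termE2 {m : ℕ} : RTerm m := .mul .id (.comp .div .div)
/-- `m2 = 0′·−(0′;0′)`. -/
def termM2 {m : ℕ} : RTerm m := .mul .div (.neg (.comp .div .div))
/-- `m3 = 0′·(0′;0′)`. -/
def termM3 {m : ℕ} : RTerm m := .mul .div (.comp .div .div)
/-- `t = 0′·0′˘·((0′·0′˘);(0′·0′˘))`. -/
def termT {m : ℕ} : RTerm m :=
  .mul (.mul .div (.conv .div)) (.comp (.mul .div (.conv .div)) (.mul .div (.conv .div)))

lemma mem_rint_sprodBy {U : Type} (W : Set (U × U)) {m : ℕ} (v : Fin m → Set (U × U))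
    (r s : U) (hrs : (r, s) ∈ W) (S : List (RTerm m)) :
    ∀ Y : List (RTerm m),
      ((r, s) ∈ rint W v (sprodBy Y S) ↔ ∀ y ∈ Y, ((r, s) ∈ rint W v y ↔ y ∈ S))
  | [] => by simpa [sprodBy, rint] using hrs
  | y :: Y => by
      have ih := mem_rint_sprodBy W v r s hrs S Y
      have hcons : sprodBy (y :: Y) S
          = RTerm.mul (if y ∈ S then y else RTerm.neg y) (sprodBy Y S) := rfl
      rw [hcons]
      by_cases h : y ∈ S <;>
        simp only [rint, Set.mem_inter_iff, if_pos, if_neg, h, ih, Set.mem_diff,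
          List.mem_cons] <;>
        constructor
      · rintro ⟨h1, h2⟩ z hz
        rcases hz with rfl | hz
        · simp [h, h1]
        · exact h2 z hz
      · intro hall
        exact ⟨(hall y (Or.inl rfl)).2 h, fun z hz => hall z (Or.inr hz)⟩
      · rintro ⟨⟨_, h1⟩, h2⟩ z hz
        rcases hz with rfl | hz
        · simp [h, h1]
        · exact h2 z hz
      · intro hall
        refine ⟨⟨hrs, fun hc => h ((hall y (Or.inl rfl)).1 hc)⟩,
          fun z hz => hall z (Or.inr hz)⟩

lemma sprodBy_congr {m : ℕ} {Y S T : List (RTerm m)}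
    (h : ∀ y ∈ Y, (y ∈ S ↔ y ∈ T)) : sprodBy Y S = sprodBy Y T := by
  unfold sprodBy
  congr 1
  exact List.map_congr_left fun y hy => by
    by_cases hS : y ∈ S
    · rw [if_pos hS, if_pos ((h y hy).1 hS)]
    · rw [if_neg hS, if_neg (fun hT => hS ((h y hy).2 hT))]

lemma sprod_exu {U : Type} (W : Set (U × U)) {m : ℕ} (v : Fin m → Set (U × U))
    (r s : U) (hrs : (r, s) ∈ W) (Y : List (RTerm m)) :
    ∃ S : List (RTerm m), S.Sublist Y ∧ (r, s) ∈ rint W v (sprodBy Y S) ∧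
      ∀ T, (r, s) ∈ rint W v (sprodBy Y T) → sprodBy Y T = sprodBy Y S := by
  classical
  refine ⟨Y.filter (fun y => decide ((r, s) ∈ rint W v y)), List.filter_sublist (l := Y), ?_, ?_⟩
  · rw [mem_rint_sprodBy W v r s hrs]
    intro y hy
    simp [List.mem_filter, hy]
  · intro T hT
    rw [mem_rint_sprodBy W v r s hrs] at hT
    refine sprodBy_congr fun y hy => ?_
    rw [← hT y hy]
    simp [List.mem_filter, hy]

/-- every pair `(r,s)` in the unit `W` satisfies exactly one
normal form of degree `k` under the relativized interpretation. -/
theorem stmt_4 (m k : ℕ) (U : Type) (W : Set (U × U)) (v : Fin m → Set (U × U))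
    (hv : ∀ i, v i ⊆ W) (r s : U) (hrs : (r, s) ∈ W) :
    ∃! τ : RTerm m, τ ∈ forms m k ∧ (r, s) ∈ rint W v τ := by
  classical
  cases k with
  | zero =>
      obtain ⟨S, hSsub, hSmem, hSuniq⟩ := sprod_exu W v r s hrs (listD m)
      refine ⟨sprodBy (listD m) S, ⟨?_, hSmem⟩, ?_⟩
      · exact List.mem_map.2 ⟨S, List.mem_sublists.2 hSsub, rfl⟩
      · rintro τ ⟨hτ, hmem⟩
        obtain ⟨T, _, rfl⟩ := List.mem_map.1 hτ
        exact hSuniq T hmem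
  | succ n =>
      obtain ⟨S, hSsub, hSmem, hSuniq⟩ := sprod_exu W v r s hrs (listD m)
      obtain ⟨T, hTsub, hTmem, hTuniq⟩ := sprod_exu W v r s hrs (listC (forms m n))
      refine ⟨RTerm.mul (sprodBy (listD m) S) (sprodBy (listC (forms m n)) T),
        ⟨?_, ⟨hSmem, hTmem⟩⟩, ?_⟩
      · exact List.mem_flatMap.2 ⟨S, List.mem_sublists.2 hSsub,
          List.mem_map.2 ⟨T, List.mem_sublists.2 hTsub, rfl⟩⟩
      · rintro τ ⟨hτ, hmem⟩
        obtain ⟨S', _, hτ'⟩ := List.mem_flatMap.1 hτ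
        obtain ⟨T', _, rfl⟩ := List.mem_map.1 hτ'
        obtain ⟨h1, h2⟩ : (r, s) ∈ rint W v (sprodBy (listD m) S') ∧
            (r, s) ∈ rint W v (sprodBy (listC (forms m n)) T') := hmem
        rw [hSuniq S' h1, hTuniq T' h2]
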